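/- Let B be the ten-element normal band B = B_α ∪ B_β ∪ B_γ ∪ B_δ defined as follows: B_α = {a,b,c,d} and B_β = {e,f,g,h} are 2×2 rectangular bands (with a,b and c,d the 𝓡-classes and a,c and b,d the 𝓛-classes of B_α, so that the product of p and q in B_α takes the 𝓡-class of p and the 𝓛-class of q, and similarly for B_β with e,f,g,h), B_γ = {v} and B_δ = {u} are singletons; the structure semilattice is Y = {α,β,γ,δ} with α > β > δ, α > γ > δ and β,γ incomparable; B is the strong semilattice of these rectangular bands with structure morphisms φ_{α,β}: a ↦ e, b ↦ f, c ↦ g, d ↦ h, and all other structure morphisms the constant maps to v or u (multiplication: for p ∈ B_σ, q ∈ B_τ, pq = (pφ_{σ,στ})(qφ_{τ,στ})). Then in IG(B) the element ē·v̄ is not R*-related to any idempotent of IG(B); in particular IG(B) is not an abundant semigroup. -/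

import Mathlib

/-! Common definitions: free idempotent generated semigroups over bands,
generalised Green's relations, and abundancy notions. -/

/-- `(e, f)` is a *basic pair* if `ef ∈ {e,f}` or `fe ∈ {e,f}`. -/
def basicPair {B : Type*} [Mul B] (e f : B) : Prop :=
  e * f = e ∨ e * f = f ∨ f * e = e ∨ f * e = f

/-- The defining congruence of the free idempotent generated semigroup `IG B`:
the congruence on the free semigroup on `{ē : e ∈ B}` generated by the relations
`ē f̄ = (ef)‾` for basic pairs `(e, f)`. -/
def igCon (B : Type*) [Semigroup B] : Con (FreeSemigroup B) :=
  conGen fun w₁ w₂ => ∃ e f : B, basicPair e f ∧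
    w₁ = FreeSemigroup.of e * FreeSemigroup.of f ∧ w₂ = FreeSemigroup.of (e * f)

/-- The free idempotent generated semigroup over a band `B`. -/
abbrev IG (B : Type*) [Semigroup B] := (igCon B).Quotient

/-- The canonical generator `ē` of `IG B`. -/
def igOf {B : Type*} [Semigroup B] (e : B) : IG B :=
  ((FreeSemigroup.of e : FreeSemigroup B) : (igCon B).Quotient)

/-- `prodSeq x a b = x a * x (a+1) * ⋯ * x b` (it is `x a` when `b ≤ a`). -/
def prodSeq {M : Type*} [Mul M] (x : ℕ → M) (a b : ℕ) : M :=
  (List.range (b - a)).foldl (fun acc i => acc * x (a + i + 1)) (x a)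

/-- The word `x̄_a x̄_{a+1} ⋯ x̄_b` in the free semigroup on `{ē : e ∈ B}`. -/
def freeWord {B : Type*} (x : ℕ → B) (a b : ℕ) : FreeSemigroup B :=
  prodSeq (fun i => FreeSemigroup.of (x i)) a b

/-- The element `x̄_a x̄_{a+1} ⋯ x̄_b` of `IG B`. -/
def igWord {B : Type*} [Semigroup B] (x : ℕ → B) (a b : ℕ) : IG B :=
  ((freeWord x a b : FreeSemigroup B) : (igCon B).Quotient)

/-- Green's relation `𝓡`: `a 𝓡 b` iff `a = b` or `as = b`, `bt = a` for some `s, t`. -/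
def GreenR {S : Type*} [Semigroup S] (a b : S) : Prop :=
  a = b ∨ ∃ s t : S, a * s = b ∧ b * t = a

/-- Green's relation `𝓛`: `a 𝓛 b` iff `a = b` or `sa = b`, `tb = a` for some `s, t`. -/
def GreenL {S : Type*} [Semigroup S] (a b : S) : Prop :=
  a = b ∨ ∃ s t : S, s * a = b ∧ t * b = a

/-- `a 𝓡* b` iff for all `x, y ∈ S¹`, `xa = ya ↔ xb = yb`. -/
def RStar {S : Type*} [Semigroup S] (a b : S) : Prop :=
  ∀ x y : WithOne S,
    x * (a : WithOne S) = y * (a : WithOne S) ↔ x * (b : WithOne S) = y * (b : WithOne S)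

/-- `a 𝓛* b` iff for all `x, y ∈ S¹`, `ax = ay ↔ bx = by`. -/
def LStar {S : Type*} [Semigroup S] (a b : S) : Prop :=
  ∀ x y : WithOne S,
    (a : WithOne S) * x = (a : WithOne S) * y ↔ (b : WithOne S) * x = (b : WithOne S) * y

/-- `a 𝓡̃ b` iff for every idempotent `e`, `ea = a ↔ eb = b`. -/
def RTilde {S : Type*} [Semigroup S] (a b : S) : Prop :=
  ∀ e : S, IsIdempotentElem e → (e * a = a ↔ e * b = b)

/-- `a 𝓛̃ b` iff for every idempotent `e`, `ae = a ↔ be = b`. -/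
def LTilde {S : Type*} [Semigroup S] (a b : S) : Prop :=
  ∀ e : S, IsIdempotentElem e → (a * e = a ↔ b * e = b)

/-- A semigroup is *abundant* if every `𝓡*`-class and every `𝓛*`-class
contains an idempotent. -/
def Abundant (S : Type*) [Semigroup S] : Prop :=
  ∀ a : S, (∃ e : S, IsIdempotentElem e ∧ RStar a e) ∧
    (∃ e : S, IsIdempotentElem e ∧ LStar a e)

/-- A semigroup is *weakly abundant* if every `𝓡̃`-class and every `𝓛̃`-class
contains an idempotent. -/
def WeaklyAbundant (S : Type*) [Semigroup S] : Prop :=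
  ∀ a : S, (∃ e : S, IsIdempotentElem e ∧ RTilde a e) ∧
    (∃ e : S, IsIdempotentElem e ∧ LTilde a e)

/-- On a band, `x` and `y` are `𝒟`-equivalent iff `xyx = x` and `yxy = y`. -/
def dEquiv {B : Type*} [Mul B] (x y : B) : Prop :=
  x * y * x = x ∧ y * x * y = y

/-- On a band, `x` and `y` are `𝒥`-incomparable iff `xyx ≠ x` and `yxy ≠ y`. -/
def jIncomp {B : Type*} [Mul B] (x y : B) : Prop :=
  x * y * x ≠ x ∧ y * x * y ≠ y

/-- One step of the reduction system induced by the presentation of `IG B`: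
replace a factor `ē f̄`, with `(e,f)` a basic pair, by `(ef)‾`. -/
def RedStep {B : Type*} [Semigroup B] (w w' : FreeSemigroup B) : Prop :=
  ∃ (p q : List B) (e f : B), basicPair e f ∧
    w.head :: w.tail = p ++ e :: f :: q ∧
    w'.head :: w'.tail = p ++ (e * f) :: q

/-- A word is in *normal form* (irreducible) if no reduction step applies. -/
def IsNF {B : Type*} [Semigroup B] (w : FreeSemigroup B) : Prop :=
  ∀ w', ¬ RedStep w w'

/-- `x̄₁ ⋯ x̄ₙ` (letters `x 1, …, x n`) is in *almost normal form* witnessed by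
block boundaries `idx 0 = 0 < idx 1 < ⋯ < idx r = n`: within each block all
letters are `𝒟`-equivalent, and letters in adjacent blocks are incomparable. -/
def AlmostNF {B : Type*} [Mul B] (x : ℕ → B) (n r : ℕ) (idx : ℕ → ℕ) : Prop :=
  1 ≤ r ∧ idx 0 = 0 ∧ idx r = n ∧
  (∀ k < r, idx k < idx (k + 1)) ∧
  (∀ k < r, ∀ p q : ℕ, idx k < p → p ≤ idx (k + 1) → idx k < q → q ≤ idx (k + 1) →
    dEquiv (x p) (x q)) ∧
  (∀ k : ℕ, k + 1 < r → ∀ p q : ℕ, idx k < p → p ≤ idx (k + 1) →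
    idx (k + 1) < q → q ≤ idx (k + 2) → jIncomp (x p) (x q))

/-- Condition (P) for `IG B`. -/
def CondP (B : Type*) [Semigroup B] : Prop :=
  ∀ (n m r : ℕ) (u v : ℕ → B) (iu iv : ℕ → ℕ),
    AlmostNF u n r iu → AlmostNF v m r iv →
    igWord u 1 n = igWord v 1 m →
    ((∀ s : ℕ, 1 ≤ s → s ≤ r →
        (u (iu s) * v (iv s) = u (iu s) ∧ v (iv s) * u (iu s) = v (iv s)) →
        igWord u 1 (iu s) = igWord v 1 (iv s)) ∧
      (∀ t : ℕ, t + 1 ≤ r →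
        (u (iu t + 1) * v (iv t + 1) = v (iv t + 1) ∧
          v (iv t + 1) * u (iu t + 1) = u (iu t + 1)) →
        igWord u (iu t + 1) n = igWord v (iv t + 1) m))

/-- A normal band is *pliant* if for every `𝒟`-class `D` there is `c ∈ D` with
`u e u = c` for every `e ∈ D` and every `u` strictly `𝒥`-above `D`. -/
def Pliant (B : Type*) [Mul B] : Prop :=
  ∀ d : B, ∃ c : B, dEquiv c d ∧
    ∀ e u : B, dEquiv e d → (e * u * e = e ∧ u * e * u ≠ u) → u * e * u = c

/-- The ten-element normal band of Section 7 of the paper: a strong semilattice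
`Y = {α, β, γ, δ}` (with `α > β > δ`, `α > γ > δ`, and `β, γ` incomparable) of
rectangular bands `B_α = {a,b,c,d}`, `B_β = {e,f,g,h}` (both `2 × 2`, with
`{a,b}, {c,d}` the `𝓡`-classes and `{a,c}, {b,d}` the `𝓛`-classes of `B_α`,
similarly for `B_β`), `B_γ = {v}`, `B_δ = {u}`; the structure morphism
`φ_{α,β}` sends `a ↦ e, b ↦ f, c ↦ g, d ↦ h`, and all remaining structure
morphisms are the constant maps onto `v` or `u`. -/
inductive B10 : Type
  | a | b | c | d | e | f | g | h | v | u
  deriving DecidableEq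

instance instFintypeB10 : Fintype B10 :=
  ⟨⟨↑[B10.a, B10.b, B10.c, B10.d, B10.e, B10.f, B10.g, B10.h, B10.v, B10.u], by decide⟩,
    fun x => by cases x <;> decide⟩

open B10 in
/-- The multiplication of `B10`: for `p ∈ B_σ`, `q ∈ B_τ`,
`p * q = (p φ_{σ,στ}) (q φ_{τ,στ})`. -/
def B10.mul : B10 → B10 → B10
  | u, _ => u
  | _, u => u
  | v, v => v
  | v, e => u | v, f => u | v, g => u | v, h => u
  | v, _ => v
  | a, v => v | b, v => v | c, v => v | d, v => v
  | e, v => u | f, v => u | g, v => u | h, v => u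
  | a, a => a | a, b => b | a, c => a | a, d => b
  | a, e => e | a, f => f | a, g => e | a, h => f
  | b, a => a | b, b => b | b, c => a | b, d => b
  | b, e => e | b, f => f | b, g => e | b, h => f
  | c, a => c | c, b => d | c, c => c | c, d => d
  | c, e => g | c, f => h | c, g => g | c, h => h
  | d, a => c | d, b => d | d, c => c | d, d => d
  | d, e => g | d, f => h | d, g => g | d, h => h
  | e, a => e | e, b => f | e, c => e | e, d => f
  | e, e => e | e, f => f | e, g => e | e, h => f
  | f, a => e | f, b => f | f, c => e | f, d => f
  | f, e => e | f, f => f | f, g => e | f, h => f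
  | g, a => g | g, b => h | g, c => g | g, d => h
  | g, e => g | g, f => h | g, g => g | g, h => h
  | h, a => g | h, b => h | h, c => g | h, d => h
  | h, e => g | h, f => h | h, g => g | h, h => h

instance : Mul B10 := ⟨B10.mul⟩

instance : Semigroup B10 where
  mul_assoc := by decide


/-! ### A finite invariant semigroup `TT` used to separate elements of `IG B10`.

`TT` is a hand-crafted 25-element semigroup together with a map
`TT.gen : B10 → TT` that respects the products of *basic pairs* (though not all
products), and hence induces a homomorphism out of `IG B10`.  It records:
* for "grid" elements (products of the letters `a,…,h` only), `P i la w l`: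
  the `𝓡`-class `i`, the `𝓛`-class `la`, a `ℤ/2`-valued Rees-matrix "weight"
  `w` twisted by the sandwich entry `sand` (which detects the non-degenerate
  loop `ē d̄` of the free idempotent generated semigroup over a `2 × 2`
  rectangular band), and whether a `β`-level letter occurs (`l`);
* for elements containing the letter `v` but not `u`, `M L m R`: whether a
  `β`-level block survives before the first `v` (`L`), whether an inner
  `β`-level block occurs between two `v`s (`m`), and whether `β`-level
  material follows the last `v` (`R`);
* `Z` absorbs every element containing the letter `u`. -/
inductive TT : Type
  | Z : TT
  | P : Bool → Bool → Bool → Bool → TT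
  | M : Bool → Bool → Bool → TT
  deriving DecidableEq, Fintype

namespace TT

/-- The Rees sandwich twist: the only non-trivial sandwich entry is `p₀₁`. -/
def sand (la j : Bool) : Bool := !la && j

/-- Multiplication of the invariant semigroup. -/
def mul : TT → TT → TT
  | Z, _ => Z
  | _, Z => Z
  | P i la w l, P j mu w2 l2 => P i mu ((w ^^ sand la j) ^^ w2) (l || l2)
  | P _ _ _ l, M L m R => M (L || l) m R
  | M L m R, P _ _ _ l2 => M L m (R || l2)
  | M L m R, M L2 m2 R2 => M L (((m || m2) || R) || L2) R2

instance : Mul TT := ⟨mul⟩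

instance : Semigroup TT where
  mul_assoc := by decide

/-- Images of the generators of `B10`. -/
def gen : B10 → TT
  | .a => P false false false false
  | .b => P false true  false false
  | .c => P true  false true  false
  | .d => P true  true  false false
  | .e => P false false false true
  | .f => P false true  false true
  | .g => P true  false true  true
  | .h => P true  true  false true
  | .v => M false false false
  | .u => Z

instance decBasic (p q : B10) : Decidable (basicPair p q) := by
  unfold basicPair; infer_instance

/-- `gen` respects products of basic pairs. -/
lemma gen_basic : ∀ p q : B10, basicPair p q → gen p * gen q = gen (p * q) := by
  decide

/-- The key finite check: no element of `TT` satisfies the two equations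
forced on the image of an idempotent in the `𝓡*`-class of `ē v̄`. -/
lemma kill : ∀ t : TT, t * (gen B10.e * gen B10.v) = gen B10.e * gen B10.v →
    (gen B10.e * gen B10.d) * t = t → False := by
  decide

end TT

/-- The induced homomorphism on the free semigroup. -/
def Fhom : FreeSemigroup B10 →ₙ* TT := FreeSemigroup.lift TT.gen

/-- `Fhom` factors through the congruence defining `IG B10`. -/
lemma Fhom_eq_of_igCon {w₁ w₂ : FreeSemigroup B10} (h : igCon B10 w₁ w₂) :
    Fhom w₁ = Fhom w₂ := by
  have hle : igCon B10 ≤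
      ⟨⟨fun x y => Fhom x = Fhom y, ⟨fun _ => rfl, Eq.symm, Eq.trans⟩⟩,
        fun h1 h2 => by simp only [map_mul]; rw [h1, h2]⟩ := by
    apply Con.conGen_le.mpr
    rintro x y ⟨p, q, hb, rfl, rfl⟩
    show Fhom _ = Fhom _
    simp only [map_mul, FreeSemigroup.lift_of, Fhom]
    exact TT.gen_basic p q hb
  exact hle h

/-- Products of basic pairs collapse in `IG`. -/
lemma igOf_mul_basic {p q : B10} (h : basicPair p q) :
    igOf p * igOf q = igOf (p * q) := by
  unfold igOf
  rw [← Con.coe_mul]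
  exact (igCon B10).eq.mpr (ConGen.Rel.of _ _ ⟨p, q, h, rfl, rfl⟩)

/-- The crucial equality `ē d̄ · ē v̄ = ē v̄` in `IG B10`. -/
lemma E1 : (igOf B10.e * igOf B10.d) * (igOf B10.e * igOf B10.v)
    = igOf B10.e * igOf B10.v := by
  have hfa : igOf B10.f * igOf B10.a = igOf B10.e := igOf_mul_basic (by decide)
  have hdf : igOf B10.d * igOf B10.f = igOf B10.h := igOf_mul_basic (by decide)
  have hav : igOf B10.a * igOf B10.v = igOf B10.v := igOf_mul_basic (by decide)
  have hgd : igOf B10.g * igOf B10.d = igOf B10.h := igOf_mul_basic (by decide)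
  have heg : igOf B10.e * igOf B10.g = igOf B10.e := igOf_mul_basic (by decide)
  have hdv : igOf B10.d * igOf B10.v = igOf B10.v := igOf_mul_basic (by decide)
  calc (igOf B10.e * igOf B10.d) * (igOf B10.e * igOf B10.v)
      = (igOf B10.e * igOf B10.d) * ((igOf B10.f * igOf B10.a) * igOf B10.v) := by
        rw [hfa]
    _ = (igOf B10.e * (igOf B10.d * igOf B10.f)) * (igOf B10.a * igOf B10.v) := by
        simp only [mul_assoc]
    _ = (igOf B10.e * igOf B10.h) * igOf B10.v := by rw [hdf, hav]
    _ = (igOf B10.e * (igOf B10.g * igOf B10.d)) * igOf B10.v := by rw [hgd]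
    _ = (igOf B10.e * igOf B10.g) * (igOf B10.d * igOf B10.v) := by
        simp only [mul_assoc]
    _ = igOf B10.e * igOf B10.v := by rw [heg, hdv]

/-- `B10` is a (normal) band, and in `IG B10` the element
`ē v̄` is not `𝓡*`-related to any idempotent of `IG B10`; in particular
`IG B10` is not an abundant semigroup. -/
theorem IG_B10_not_abundant :
    (∀ p : B10, p * p = p) ∧
    (∀ p q r : B10, p * q * r * p = p * r * q * p) ∧
    (¬ ∃ w : IG B10, IsIdempotentElem w ∧ RStar (igOf B10.e * igOf B10.v) w) ∧
    ¬ Abundant (IG B10) := by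
  have key : ¬ ∃ w : IG B10, IsIdempotentElem w ∧
      RStar (igOf B10.e * igOf B10.v) w := by
    rintro ⟨w, hid, hR⟩
    obtain ⟨W, hW⟩ := Quotient.exists_rep w
    -- from idempotency and `RStar`, `w · ē v̄ = ē v̄`
    have h1 : w * (igOf B10.e * igOf B10.v) = igOf B10.e * igOf B10.v := by
      have hrhs : (w : WithOne (IG B10)) * (w : WithOne (IG B10))
          = 1 * (w : WithOne (IG B10)) := by
        rw [one_mul, ← WithOne.coe_mul, hid]
      have h := (hR (w : WithOne (IG B10)) 1).mpr hrhs
      rw [one_mul, ← WithOne.coe_mul] at h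
      exact WithOne.coe_inj.mp h
    -- from `E1` and `RStar`, `ē d̄ · w = w`
    have h2 : (igOf B10.e * igOf B10.d) * w = w := by
      have hlhs : ((igOf B10.e * igOf B10.d : IG B10) : WithOne (IG B10)) *
          ((igOf B10.e * igOf B10.v : IG B10) : WithOne (IG B10))
          = 1 * ((igOf B10.e * igOf B10.v : IG B10) : WithOne (IG B10)) := by
        rw [one_mul, ← WithOne.coe_mul, E1]
      have h := (hR ((igOf B10.e * igOf B10.d : IG B10) : WithOne (IG B10)) 1).mp hlhs
      rw [one_mul, ← WithOne.coe_mul] at h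
      exact WithOne.coe_inj.mp h
    -- push both equalities through the invariant homomorphism
    have c1 : Fhom W * (TT.gen B10.e * TT.gen B10.v)
        = TT.gen B10.e * TT.gen B10.v := by
      have H : ((W * (FreeSemigroup.of B10.e * FreeSemigroup.of B10.v) :
          FreeSemigroup B10) : (igCon B10).Quotient)
          = ((FreeSemigroup.of B10.e * FreeSemigroup.of B10.v :
          FreeSemigroup B10) : (igCon B10).Quotient) := by
        rw [Con.coe_mul, Con.coe_mul]
        show (W : (igCon B10).Quotient) * (igOf B10.e * igOf B10.v)
          = igOf B10.e * igOf B10.v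
        rw [show (W : (igCon B10).Quotient) = w from hW]; exact h1
      have hF := Fhom_eq_of_igCon ((igCon B10).eq.mp H)
      simpa only [map_mul, FreeSemigroup.lift_of, Fhom] using hF
    have c2 : (TT.gen B10.e * TT.gen B10.d) * Fhom W = Fhom W := by
      have H : (((FreeSemigroup.of B10.e * FreeSemigroup.of B10.d) * W :
          FreeSemigroup B10) : (igCon B10).Quotient)
          = ((W : FreeSemigroup B10) : (igCon B10).Quotient) := by
        rw [Con.coe_mul, Con.coe_mul]
        show (igOf B10.e * igOf B10.d) * (W : (igCon B10).Quotient)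
          = (W : (igCon B10).Quotient)
        rw [show (W : (igCon B10).Quotient) = w from hW]; exact h2
      have hF := Fhom_eq_of_igCon ((igCon B10).eq.mp H)
      simpa only [map_mul, FreeSemigroup.lift_of, Fhom] using hF
    exact TT.kill (Fhom W) c1 c2
  refine ⟨by decide, by decide, key, fun hab => key ?_⟩
  obtain ⟨⟨e, he, hRs⟩, -⟩ := hab (igOf B10.e * igOf B10.v)
  exact ⟨e, he, hRs⟩
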